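/- arXiv:math/0609388 — 3 statements merged into one kernel-verified Lean document; each statement's English description precedes it below -/
import Mathlib

section
/- For two perfect forms A and B with the same arithmetical minimum and P ∈ GL_d(ℤ), one has B = ᵗP A P if and only if P⁻¹ maps Min(A) onto Min(B) (equivalently, Min(B) = P⁻¹ Min(A)). -/
open Matrix

noncomputable section

/-- The real vector associated to an integer vector. -/
def ivec {d : ℕ} (v : Fin d → ℤ) : Fin d → ℝ := fun i => (v i : ℝ)

/-- The value ᵗv A v of the quadratic form given by `A` at the integer vector `v`. -/
def qf {d : ℕ} (A : Matrix (Fin d) (Fin d) ℝ) (v : Fin d → ℤ) : ℝ :=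
  ivec v ⬝ᵥ A.mulVec (ivec v)

/-- The arithmetical minimum λ(A). -/
def lam {d : ℕ} (A : Matrix (Fin d) (Fin d) ℝ) : ℝ :=
  sInf {r : ℝ | ∃ v : Fin d → ℤ, v ≠ 0 ∧ qf A v = r}

/-- The set of shortest (minimal) vectors Min(A). -/
def MinVecs {d : ℕ} (A : Matrix (Fin d) (Fin d) ℝ) : Set (Fin d → ℤ) :=
  {v | v ≠ 0 ∧ qf A v = lam A}

/-- A positive definite symmetric matrix is perfect if it is uniquely determined among
symmetric matrices by the equations ᵗvBv = λ(A), v ∈ Min(A). -/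
def IsPerfect {d : ℕ} (A : Matrix (Fin d) (Fin d) ℝ) : Prop :=
  A.PosDef ∧ A.IsSymm ∧
    ∀ B : Matrix (Fin d) (Fin d) ℝ, B.IsSymm →
      (∀ v ∈ MinVecs A, qf B v = lam A) → B = A

end

lemma ivec_mulVec {d : ℕ} (P : Matrix (Fin d) (Fin d) ℤ) (v : Fin d → ℤ) :
    ivec (P.mulVec v) = (P.map (Int.cast : ℤ → ℝ)).mulVec (ivec v) := by
  funext i
  simp [ivec, Matrix.mulVec, dotProduct, Matrix.map_apply]

lemma qf_conj {d : ℕ} (A : Matrix (Fin d) (Fin d) ℝ) (P : Matrix (Fin d) (Fin d) ℤ)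
    (v : Fin d → ℤ) :
    qf ((P.map (Int.cast : ℤ → ℝ))ᵀ * A * P.map (Int.cast : ℤ → ℝ)) v
      = qf A (P.mulVec v) := by
  unfold qf
  rw [ivec_mulVec]
  set Q := P.map (Int.cast : ℤ → ℝ)
  rw [Matrix.mul_assoc, ← Matrix.mulVec_mulVec,
    Matrix.dotProduct_mulVec, Matrix.vecMul_transpose, ← Matrix.mulVec_mulVec]

lemma mulVec_ne_zero {d : ℕ} (P : Matrix (Fin d) (Fin d) ℤ) (hP : IsUnit P.det)
    (v : Fin d → ℤ) (hv : v ≠ 0) : P.mulVec v ≠ 0 := by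
  obtain ⟨u, hu⟩ := (Matrix.isUnit_iff_isUnit_det P).2 hP
  obtain ⟨Q, hQ⟩ : ∃ Q, Q * P = 1 := ⟨(↑u⁻¹ : Matrix (Fin d) (Fin d) ℤ), by
    rw [← hu]; exact u.inv_mul⟩
  intro h
  apply hv
  have h2 : (Q * P).mulVec v = 0 := by
    rw [← Matrix.mulVec_mulVec, h, Matrix.mulVec_zero]
  rwa [hQ, Matrix.one_mulVec] at h2

/-- For perfect forms A, B with the same arithmetical minimum and P ∈ GL_d(ℤ),
B = ᵗP A P iff P⁻¹ maps Min(A) onto Min(B), i.e. Min(B) = {v | P v ∈ Min(A)}. -/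
theorem equiv_iff_min_maps {d : ℕ} (A B : Matrix (Fin d) (Fin d) ℝ)
    (hA : IsPerfect A) (hB : IsPerfect B) (hlam : lam A = lam B)
    (P : Matrix (Fin d) (Fin d) ℤ) (hP : IsUnit P.det) :
    B = (P.map (Int.cast : ℤ → ℝ))ᵀ * A * P.map (Int.cast : ℤ → ℝ) ↔
      MinVecs B = {v : Fin d → ℤ | P.mulVec v ∈ MinVecs A} := by
  constructor
  · intro hBe
    ext v
    constructor
    · rintro ⟨hv, hq⟩
      have hq' : qf A (P.mulVec v) = lam B := by rw [← qf_conj, ← hBe]; exact hq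
      exact ⟨mulVec_ne_zero P hP v hv, by rw [hq', ← hlam]⟩
    · rintro ⟨hPv, hq⟩
      refine ⟨fun h => hPv (by rw [h, Matrix.mulVec_zero]), ?_⟩
      rw [show qf B v = qf A (P.mulVec v) from by rw [hBe, qf_conj], hq, hlam]
  · intro hMin
    set C := (P.map (Int.cast : ℤ → ℝ))ᵀ * A * P.map (Int.cast : ℤ → ℝ) with hC
    have hCsymm : C.IsSymm := by
      unfold Matrix.IsSymm
      rw [hC, Matrix.transpose_mul, Matrix.transpose_mul, Matrix.transpose_transpose,
        hA.2.1.eq, Matrix.mul_assoc]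
    have := hB.2.2 C hCsymm (fun v hv => by
      rw [hMin] at hv
      rw [hC, qf_conj, hv.2, hlam])
    exact this.symm
end

section
/- Let (v_i)_{1≤i≤N} and (v'_i)_{1≤i≤N} be full-dimensional vector families in ℝ^m with edge weights c_{ij} = ᵗv_i Q⁻¹ v_j and c'_{ij} = ᵗv'_i Q'⁻¹ v'_j, where Q = Σ v_i·ᵗv_i and Q' = Σ v'_i·ᵗv'_i. If c_{ij} = c'_{ij} for all i, j, then there exists a unique invertible linear map A with A v_i = v'_i for all i. -/
open Matrix

lemma vmv_mulVec {n : ℕ} (a b x : Fin n → ℝ) : (vecMulVec a b).mulVec x = (b ⬝ᵥ x) • a := by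
  ext i
  simp only [mulVec, vecMulVec_apply, dotProduct, Pi.smul_apply, smul_eq_mul, Finset.sum_mul,
    Finset.mul_sum]
  exact Finset.sum_congr rfl fun j _ => by ring

lemma sum_mulVec' {n N : ℕ} (M : Fin N → Matrix (Fin n) (Fin n) ℝ) (x : Fin n → ℝ) :
    (∑ i, M i) *ᵥ x = ∑ i, M i *ᵥ x := by
  ext k
  simp only [mulVec, dotProduct, Finset.sum_apply, Matrix.sum_apply, Finset.sum_mul]
  exact Finset.sum_comm

lemma dotProduct_sum' {n N : ℕ} (x : Fin n → ℝ) (f : Fin N → (Fin n → ℝ)) :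
    x ⬝ᵥ (∑ i, f i) = ∑ i, x ⬝ᵥ f i := by
  simp only [dotProduct, Finset.sum_apply, Finset.mul_sum]
  exact Finset.sum_comm

lemma gram_posdef {m N : ℕ} (v : Fin N → (Fin m → ℝ))
    (hv : Submodule.span ℝ (Set.range v) = ⊤) :
    Matrix.PosDef (∑ i, vecMulVec (v i) (v i)) := by
  have hsym : (∑ i, vecMulVec (v i) (v i))ᵀ = ∑ i, vecMulVec (v i) (v i) := by
    rw [transpose_sum]
    refine Finset.sum_congr rfl fun i _ => ?_
    ext a b; simp [vecMulVec_apply, mul_comm]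
  refine posDef_iff_dotProduct_mulVec.mpr ⟨hsym, fun x hx => ?_⟩
  have hmv : (∑ i, vecMulVec (v i) (v i)) *ᵥ x = ∑ i, (v i ⬝ᵥ x) • v i := by
    rw [sum_mulVec']
    exact Finset.sum_congr rfl fun i _ => vmv_mulVec _ _ _
  have hdp : star x ⬝ᵥ ((∑ i, vecMulVec (v i) (v i)) *ᵥ x) = ∑ i, (v i ⬝ᵥ x) ^ 2 := by
    rw [star_trivial, hmv, dotProduct_sum']
    refine Finset.sum_congr rfl fun i _ => ?_
    rw [dotProduct_smul, smul_eq_mul, dotProduct_comm]; ring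
  rw [hdp]
  have hexists : ∃ i, v i ⬝ᵥ x ≠ 0 := by
    by_contra h
    push_neg at h
    have hx0 : x ⬝ᵥ x = 0 := by
      have hxmem : x ∈ Submodule.span ℝ (Set.range v) := hv ▸ Submodule.mem_top
      have : ∀ y ∈ Submodule.span ℝ (Set.range v), y ⬝ᵥ x = 0 := by
        intro y hy
        induction hy using Submodule.span_induction with
        | mem y hy => obtain ⟨i, rfl⟩ := hy; exact h i
        | zero => simp
        | add y z _ _ hy hz => rw [add_dotProduct, hy, hz, add_zero]
        | smul a y _ hy => rw [smul_dotProduct, hy, smul_zero]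
      exact this x hxmem
    exact hx (by simpa using hx0)
  obtain ⟨i, hi⟩ := hexists
  exact Finset.sum_pos' (fun j _ => sq_nonneg _) ⟨i, Finset.mem_univ i, by positivity⟩

lemma gram_symm {m N : ℕ} (v : Fin N → (Fin m → ℝ)) :
    (∑ i, vecMulVec (v i) (v i))ᵀ = ∑ i, vecMulVec (v i) (v i) := by
  rw [transpose_sum]
  refine Finset.sum_congr rfl fun i _ => ?_
  ext a b; simp [vecMulVec_apply, mul_comm]

lemma symm_dot_swap {n : ℕ} (S : Matrix (Fin n) (Fin n) ℝ) (hS : Sᵀ = S) (a b : Fin n → ℝ) :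
    (S *ᵥ a) ⬝ᵥ b = a ⬝ᵥ (S *ᵥ b) := by
  rw [dotProduct_comm, dotProduct_mulVec, ← mulVec_transpose, hS, dotProduct_comm]

/-- If two full-dimensional families have equal edge weights c_{ij} = ᵗv_i Q⁻¹ v_j,
then there is a unique invertible linear map A with A v_i = v'_i for all i. -/
theorem restricted_isom_exists_unique {m N : ℕ}
    (v v' : Fin N → (Fin m → ℝ))
    (hv : Submodule.span ℝ (Set.range v) = ⊤)
    (hv' : Submodule.span ℝ (Set.range v') = ⊤)
    (Q Q' : Matrix (Fin m) (Fin m) ℝ)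
    (hQ : Q = ∑ i, vecMulVec (v i) (v i))
    (hQ' : Q' = ∑ i, vecMulVec (v' i) (v' i))
    (hc : ∀ i j, v i ⬝ᵥ Q⁻¹.mulVec (v j) = v' i ⬝ᵥ Q'⁻¹.mulVec (v' j)) :
    ∃! A : Matrix (Fin m) (Fin m) ℝ, IsUnit A.det ∧ ∀ i, A.mulVec (v i) = v' i := by
  have hQpd : Q.PosDef := hQ ▸ gram_posdef v hv
  have hQ'pd : Q'.PosDef := hQ' ▸ gram_posdef v' hv'
  have hQu : IsUnit Q.det := (Matrix.isUnit_iff_isUnit_det _).1 hQpd.isUnit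
  have hQ'u : IsUnit Q'.det := (Matrix.isUnit_iff_isUnit_det _).1 hQ'pd.isUnit
  have hQinv_sym : (Q⁻¹)ᵀ = Q⁻¹ := by
    rw [transpose_nonsing_inv, hQ, gram_symm]
  set A : Matrix (Fin m) (Fin m) ℝ := ∑ i, vecMulVec (v' i) (Q⁻¹ *ᵥ v i) with hAdef
  have hA : ∀ j, A *ᵥ v j = v' j := by
    intro j
    have h1 : A *ᵥ v j = ∑ i, ((Q⁻¹ *ᵥ v i) ⬝ᵥ v j) • v' i := by
      rw [hAdef, sum_mulVec']
      exact Finset.sum_congr rfl fun i _ => vmv_mulVec _ _ _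
    have h2 : ∀ i, (Q⁻¹ *ᵥ v i) ⬝ᵥ v j = v' i ⬝ᵥ (Q'⁻¹ *ᵥ v' j) := fun i => by
      rw [symm_dot_swap _ hQinv_sym, hc]
    have h3 : (∑ i, ((v' i) ⬝ᵥ (Q'⁻¹ *ᵥ v' j)) • v' i) = Q' *ᵥ (Q'⁻¹ *ᵥ v' j) := by
      rw [hQ', sum_mulVec']
      exact (Finset.sum_congr rfl fun i _ => (vmv_mulVec _ _ _)).symm
    rw [h1]
    simp_rw [h2]
    rw [h3, mulVec_mulVec, mul_nonsing_inv _ hQ'u, one_mulVec]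
  have hrange : LinearMap.range (Matrix.toLin' A) = ⊤ := by
    rw [eq_top_iff, ← hv', Submodule.span_le]
    rintro _ ⟨i, rfl⟩
    exact ⟨v i, hA i⟩
  have hinj : Function.Injective (Matrix.toLin' A) :=
    (LinearMap.injective_iff_surjective).2 (LinearMap.range_eq_top.1 hrange)
  have hdet : IsUnit A.det := by
    rw [isUnit_iff_ne_zero]
    intro h0
    obtain ⟨w, hw0, hw⟩ := (Matrix.exists_mulVec_eq_zero_iff).2 h0
    exact hw0 (hinj (show (Matrix.toLin' A) w = (Matrix.toLin' A) 0 by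
      simp [Matrix.toLin'_apply, hw]))
  refine ⟨A, ⟨hdet, hA⟩, ?_⟩
  rintro B ⟨hBdet, hB⟩
  have : (Matrix.toLin' B) = (Matrix.toLin' A) := by
    apply LinearMap.ext_on hv
    rintro _ ⟨i, rfl⟩
    simp only [Matrix.toLin'_apply, hA i, hB i]
  exact Matrix.toLin'.injective this
end

section
/- If A is a positive definite d×d matrix and U a nonzero symmetric matrix with ᵗvUv = 0 for all v in some subset S of Min(A), then for all sufficiently small real t the matrix A + tU is positive definite and every v ∈ S satisfies ᵗv(A+tU)v = λ(A). -/
open Matrix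

lemma aux_cont {d : ℕ} (A : Matrix (Fin d) (Fin d) ℝ) :
    Continuous fun x : Fin d → ℝ => x ⬝ᵥ A.mulVec x := by
  unfold dotProduct Matrix.mulVec
  refine continuous_finset_sum _ fun i _ => (continuous_apply i).mul ?_
  exact continuous_finset_sum _ fun j _ => continuous_const.mul (continuous_apply j)

/-- Coercivity of a positive definite quadratic form. -/
lemma aux_coercive {d : ℕ} (A : Matrix (Fin d) (Fin d) ℝ) (hA : A.PosDef) :
    ∃ c > (0 : ℝ), ∀ x : Fin d → ℝ, c * ‖x‖ ^ 2 ≤ x ⬝ᵥ A.mulVec x := by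
  rcases isEmpty_or_nonempty (Fin d) with h | h
  · refine ⟨1, one_pos, fun x => ?_⟩
    have hx : x = 0 := Subsingleton.elim _ _
    simp [hx, Matrix.mulVec_zero]
  · have hcs : IsCompact (Metric.sphere (0 : Fin d → ℝ) 1) := isCompact_sphere 0 1
    have hne : (Metric.sphere (0 : Fin d → ℝ) 1).Nonempty :=
      NormedSpace.sphere_nonempty.2 zero_le_one
    obtain ⟨u, hu, hmin⟩ := hcs.exists_isMinOn hne ((aux_cont A).continuousOn)
    have hu1 : ‖u‖ = 1 := by simpa using hu
    have hu0 : u ≠ 0 := by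
      intro h0; rw [h0] at hu1; simp at hu1
    set c := u ⬝ᵥ A.mulVec u with hc
    have hcpos : 0 < c := by
      have := hA.dotProduct_mulVec_pos hu0
      simpa [hc, star_trivial] using this
    refine ⟨c, hcpos, fun x => ?_⟩
    rcases eq_or_ne x 0 with rfl | hx0
    · simp [Matrix.mulVec_zero]
    · have hxn : (0 : ℝ) < ‖x‖ := norm_pos_iff.2 hx0
      set y := (‖x‖)⁻¹ • x with hy
      have hysph : y ∈ Metric.sphere (0 : Fin d → ℝ) 1 := by
        simp [hy, norm_smul, abs_of_pos (inv_pos.2 hxn), inv_mul_cancel₀ hxn.ne']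
      have hyle : c ≤ y ⬝ᵥ A.mulVec y := hmin hysph
      have h2 : (0 : ℝ) < ‖x‖ ^ 2 := by positivity
      have hxx : x = ‖x‖ • y := by
        rw [hy, smul_smul, mul_inv_cancel₀ hxn.ne', one_smul]
      have hQ : x ⬝ᵥ A.mulVec x = ‖x‖ ^ 2 * (y ⬝ᵥ A.mulVec y) := by
        conv_lhs => rw [hxx]
        rw [Matrix.mulVec_smul, dotProduct_smul, smul_dotProduct, smul_eq_mul, smul_eq_mul]
        ring
      rw [hQ]
      have := mul_le_mul_of_nonneg_left hyle h2.le
      linarith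

/-- Bound for a quadratic form. -/
lemma aux_bound {d : ℕ} (U : Matrix (Fin d) (Fin d) ℝ) :
    ∃ C ≥ (0 : ℝ), ∀ x : Fin d → ℝ, |x ⬝ᵥ U.mulVec x| ≤ C * ‖x‖ ^ 2 := by
  refine ⟨∑ i, ∑ j, |U i j|, by positivity, fun x => ?_⟩
  have hxi : ∀ i, |x i| ≤ ‖x‖ := fun i => norm_le_pi_norm x i
  calc |x ⬝ᵥ U.mulVec x| = |∑ i, ∑ j, x i * (U i j * x j)| := by
        simp [dotProduct, Matrix.mulVec, Finset.mul_sum]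
    _ ≤ ∑ i, ∑ j, |x i * (U i j * x j)| := by
        refine (Finset.abs_sum_le_sum_abs _ _).trans ?_
        exact Finset.sum_le_sum fun i _ => Finset.abs_sum_le_sum_abs _ _
    _ ≤ ∑ i, ∑ j, |U i j| * ‖x‖ ^ 2 := by
        refine Finset.sum_le_sum fun i _ => Finset.sum_le_sum fun j _ => ?_
        rw [abs_mul, abs_mul]
        calc |x i| * (|U i j| * |x j|) = |U i j| * (|x i| * |x j|) := by ring
          _ ≤ |U i j| * (‖x‖ * ‖x‖) := by
              exact mul_le_mul_of_nonneg_left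
                (mul_le_mul (hxi i) (hxi j) (abs_nonneg _) (norm_nonneg _)) (abs_nonneg _)
          _ = |U i j| * ‖x‖ ^ 2 := by ring
    _ = (∑ i, ∑ j, |U i j|) * ‖x‖ ^ 2 := by rw [Finset.sum_mul]; congr 1; ext i; rw [Finset.sum_mul]

/-- If U is a nonzero symmetric matrix vanishing on a subset S of Min(A), then for all
sufficiently small t the matrix A + tU is positive definite and every v ∈ S still has
value λ(A). -/
theorem perturbation_keeps_min {d : ℕ} (A U : Matrix (Fin d) (Fin d) ℝ)
    (hA : A.PosDef) (hU : U.IsSymm) (hU0 : U ≠ 0)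
    (S : Set (Fin d → ℤ)) (hS : S ⊆ MinVecs A)
    (hvan : ∀ v ∈ S, qf U v = 0) :
    ∃ ε > (0 : ℝ), ∀ t : ℝ, |t| < ε →
      (A + t • U).PosDef ∧ ∀ v ∈ S, qf (A + t • U) v = lam A := by
  obtain ⟨c, hc, hcoer⟩ := aux_coercive A hA
  obtain ⟨C, hC, hbound⟩ := aux_bound U
  refine ⟨c / (C + 1), div_pos hc (by linarith), fun t ht => ?_⟩
  constructor
  · refine Matrix.PosDef.of_dotProduct_mulVec_pos ?_ ?_
    · show (A + t • U)ᴴ = A + t • U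
      rw [conjTranspose_add, conjTranspose_smul, hA.1.eq, star_trivial,
        conjTranspose_eq_transpose_of_trivial, hU.eq]
    · intro x hx
      have h1 : c * ‖x‖ ^ 2 ≤ x ⬝ᵥ A.mulVec x := hcoer x
      have h2 : |x ⬝ᵥ U.mulVec x| ≤ C * ‖x‖ ^ 2 := hbound x
      have hxn : (0 : ℝ) < ‖x‖ ^ 2 := pow_pos (norm_pos_iff.2 hx) 2
      have hexp : star x ⬝ᵥ (A + t • U).mulVec x
          = x ⬝ᵥ A.mulVec x + t * (x ⬝ᵥ U.mulVec x) := by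
        simp [star_trivial, Matrix.add_mulVec, Matrix.smul_mulVec,
          dotProduct_add, dotProduct_smul, smul_eq_mul]
      rw [hexp]
      have h3 : |t * (x ⬝ᵥ U.mulVec x)| ≤ |t| * (C * ‖x‖ ^ 2) := by
        rw [abs_mul]
        exact mul_le_mul_of_nonneg_left h2 (abs_nonneg t)
      have h4 : |t| * (C * ‖x‖ ^ 2) < c * ‖x‖ ^ 2 := by
        have : |t| * (C + 1) < c := by
          calc |t| * (C + 1) < (c / (C + 1)) * (C + 1) := by
                exact mul_lt_mul_of_pos_right ht (by linarith)
            _ = c := by field_simp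
        calc |t| * (C * ‖x‖ ^ 2) ≤ |t| * ((C + 1) * ‖x‖ ^ 2) := by
              refine mul_le_mul_of_nonneg_left ?_ (abs_nonneg t)
              exact mul_le_mul_of_nonneg_right (by linarith) hxn.le
          _ = (|t| * (C + 1)) * ‖x‖ ^ 2 := by ring
          _ < c * ‖x‖ ^ 2 := mul_lt_mul_of_pos_right this hxn
      have := (neg_abs_le (t * (x ⬝ᵥ U.mulVec x)))
      nlinarith [abs_nonneg (t * (x ⬝ᵥ U.mulVec x))]
  · intro v hv
    have hexp : qf (A + t • U) v = qf A v + t * qf U v := by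
      unfold qf
      simp [Matrix.add_mulVec, Matrix.smul_mulVec, dotProduct_add,
        dotProduct_smul, smul_eq_mul]
    rw [hexp, hvan v hv, (hS hv).2]
    ring
end
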